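/- In the state-pair-estimator Obs_P(G), for every s ∈ L(G), the reached state satisfies f_P(q_{0,P}, H_a(s)) = { (δ(t), (δ(w₁), δ(w₂))) : t, w₁, w₂ ∈ L(G), H_a(s) = H_a(t), H_o(t) = H_o(w₁) = H_o(w₂) }. -/

import Mathlib

structure PDFA (X E : Type*) where
  step : X → E → Option X
  init : X

def PDFA.runFrom {X E : Type*} (G : PDFA X E) (x : X) (s : List E) : Option X :=
  s.foldl (fun ox e => ox.bind fun x' => G.step x' e) (some x)

def PDFA.run {X E : Type*} (G : PDFA X E) (s : List E) : Option X :=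
  G.runFrom G.init s

def PDFA.lang {X E : Type*} (G : PDFA X E) : Set (List E) :=
  {s | (G.run s).isSome}

def obs {E O : Type*} (H : E → Option O) (s : List E) : List O := s.filterMap H

/-- Transition function f_P of the state-pair-estimator. -/
def spStep {X E O1 O2 : Type*} (G : PDFA X E) (Ho : E → Option O1) (Ha : E → Option O2)
    (qP : Set (X × (X × X))) (o : O2) : Set (X × (X × X)) :=
  {p' | ∃ p ∈ qP, ∃ w w1 w2 : List E,
      obs Ha w = [o] ∧ obs Ho w = obs Ho w1 ∧ obs Ho w = obs Ho w2 ∧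
      G.runFrom p.1 w = some p'.1 ∧ G.runFrom p.2.1 w1 = some p'.2.1 ∧
      G.runFrom p.2.2 w2 = some p'.2.2}

/-- Initial state q_{0,P} of the state-pair-estimator. -/
def spInit {X E O1 O2 : Type*} (G : PDFA X E) (Ho : E → Option O1) (Ha : E → Option O2) :
    Set (X × (X × X)) :=
  {p | ∃ w w1 w2 : List E,
      obs Ha w = [] ∧ obs Ho w = obs Ho w1 ∧ obs Ho w = obs Ho w2 ∧
      G.run w = some p.1 ∧ G.run w1 = some p.2.1 ∧ G.run w2 = some p.2.2}

lemma foldl_step_none {X E : Type*} (G : PDFA X E) (s : List E) :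
    s.foldl (fun ox e => ox.bind fun x' => G.step x' e) none = none := by
  induction s with
  | nil => rfl
  | cons a t ih => simpa using ih

lemma runFrom_append {X E : Type*} (G : PDFA X E) (x : X) (a b : List E) :
    G.runFrom x (a ++ b) = (G.runFrom x a).bind fun y => G.runFrom y b := by
  unfold PDFA.runFrom
  rw [List.foldl_append]
  cases h : List.foldl (fun ox e => ox.bind fun x' => G.step x' e) (some x) a with
  | none => simpa using foldl_step_none G b
  | some y => rfl

lemma filterMap_split {α β : Type*} (H : α → Option β) :
    ∀ (w : List α) {a b : List β}, w.filterMap H = a ++ b →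
      ∃ w1 w2, w = w1 ++ w2 ∧ w1.filterMap H = a ∧ w2.filterMap H = b := by
  intro w
  induction w with
  | nil =>
    intro a b h
    simp only [List.filterMap_nil] at h
    rcases List.append_eq_nil_iff.mp h.symm with ⟨rfl, rfl⟩
    exact ⟨[], [], rfl, rfl, rfl⟩
  | cons x xs ih =>
    intro a b h
    rw [List.filterMap_cons] at h
    cases hx : H x with
    | none =>
      rw [hx] at h
      obtain ⟨w1, w2, rfl, h1, h2⟩ := ih h
      exact ⟨x :: w1, w2, rfl, by rw [List.filterMap_cons, hx]; exact h1, h2⟩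
    | some y =>
      rw [hx] at h
      cases a with
      | nil =>
        exact ⟨[], x :: xs, rfl, rfl, by rw [List.filterMap_cons, hx]; simpa using h⟩
      | cons a0 as =>
        simp only [List.cons_append, List.cons.injEq] at h
        obtain ⟨rfl, h'⟩ := h
        obtain ⟨w1, w2, rfl, h1, h2⟩ := ih h'
        exact ⟨x :: w1, w2, rfl, by rw [List.filterMap_cons, hx, h1], h2⟩

lemma sp_key {X E O1 O2 : Type*} (G : PDFA X E)
    (Ho : E → Option O1) (Ha : E → Option O2) (l : List O2) :
    l.foldl (spStep G Ho Ha) (spInit G Ho Ha) =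
      {p | ∃ t w1 w2 : List E,
          l = obs Ha t ∧ obs Ho t = obs Ho w1 ∧ obs Ho t = obs Ho w2 ∧
          G.run t = some p.1 ∧ G.run w1 = some p.2.1 ∧ G.run w2 = some p.2.2} := by
  induction l using List.reverseRecOn with
  | nil =>
    ext p
    constructor
    · rintro ⟨t, w1, w2, h0, h1, h2, r0, r1, r2⟩
      exact ⟨t, w1, w2, h0.symm, h1, h2, r0, r1, r2⟩
    · rintro ⟨t, w1, w2, h0, h1, h2, r0, r1, r2⟩
      exact ⟨t, w1, w2, h0.symm, h1, h2, r0, r1, r2⟩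
  | append_singleton l o ih =>
    rw [List.foldl_append, ih]
    ext p'
    constructor
    · rintro ⟨p, ⟨t, w1, w2, h0, h1, h2, r0, r1, r2⟩, w, u1, u2, hw, hw1, hw2, s0, s1, s2⟩
      refine ⟨t ++ w, w1 ++ u1, w2 ++ u2, ?_, ?_, ?_, ?_, ?_, ?_⟩
      · simp only [obs, List.filterMap_append] at *
        rw [← h0, hw]
      · simp only [obs, List.filterMap_append] at *
        rw [h1, hw1]
      · simp only [obs, List.filterMap_append] at *
        rw [h2, hw2]
      · rw [PDFA.run, runFrom_append, ← PDFA.run, r0]; exact s0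
      · rw [PDFA.run, runFrom_append, ← PDFA.run, r1]; exact s1
      · rw [PDFA.run, runFrom_append, ← PDFA.run, r2]; exact s2
    · rintro ⟨t, w1, w2, h0, h1, h2, r0, r1, r2⟩
      obtain ⟨t1, t2, rfl, hA1, hA2⟩ := filterMap_split Ha t h0.symm
      have hHo : obs Ho t1 ++ obs Ho t2 = obs Ho (t1 ++ t2) :=
        (List.filterMap_append ..).symm
      obtain ⟨u1, v1, rfl, hu1, hv1⟩ := filterMap_split Ho w1 (hHo.trans h1).symm
      obtain ⟨u2, v2, rfl, hu2, hv2⟩ := filterMap_split Ho w2 (hHo.trans h2).symm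
      rw [PDFA.run, runFrom_append, ← PDFA.run] at r0 r1 r2
      obtain ⟨x1, e0, f0⟩ := Option.bind_eq_some_iff.mp r0
      obtain ⟨y1, e1, f1⟩ := Option.bind_eq_some_iff.mp r1
      obtain ⟨y2, e2, f2⟩ := Option.bind_eq_some_iff.mp r2
      exact ⟨(x1, y1, y2), ⟨t1, u1, u2, hA1.symm, hu1.symm, hu2.symm, e0, e1, e2⟩,
        t2, v1, v2, hA2, hv1.symm, hv2.symm, f0, f1, f2⟩

/-- For every s ∈ L(G),
f_P(q_{0,P}, H_a(s)) = {(δ(t),(δ(w₁),δ(w₂))) : t,w₁,w₂ ∈ L(G),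
H_a(s) = H_a(t), H_o(t) = H_o(w₁) = H_o(w₂)}. -/
theorem stmt_17 {X E O1 O2 : Type*} (G : PDFA X E)
    (Ho : E → Option O1) (Ha : E → Option O2) :
    ∀ s ∈ G.lang,
      (obs Ha s).foldl (spStep G Ho Ha) (spInit G Ho Ha) =
        {p | ∃ t w1 w2 : List E,
            obs Ha s = obs Ha t ∧ obs Ho t = obs Ho w1 ∧ obs Ho t = obs Ho w2 ∧
            G.run t = some p.1 ∧ G.run w1 = some p.2.1 ∧ G.run w2 = some p.2.2} := by
  intro s _
  exact sp_key G Ho Ha (obs Ha s)
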